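/- arXiv:1401.0829 — 2 statements merged into one kernel-verified Lean document; each statement's English description precedes it below -/
import Mathlib

section
/- Let d ≥ 3, W : ℝ^d → [0,∞) continuous and supported in the unit ball, and define the rescaled killing probability u_W^ε(x) = ε^{2−d} u_W(x/ε). Then for all x, z ∈ ℝ^d and ε > 0 with ‖x‖ ≥ max{2‖z‖ + ε, 2ε}, we have |u_W^ε(x+z) − u_W^ε(x)| ≤ 2^{3d−6} ‖z‖ / ‖x‖^{d−1}, uniformly in W. -/
open MeasureTheory

lemma pow_sub_pow_le' {x y : ℝ} (n : ℕ) (h0 : 0 ≤ y) (h : y ≤ x) :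
    x ^ n - y ^ n ≤ n * x ^ (n - 1) * (x - y) := by
  induction n with
  | zero => simp
  | succ m ih =>
    have hx0 : 0 ≤ x := h0.trans h
    cases m with
    | zero => simp
    | succ k =>
      have hyn : y ^ (k + 1) ≤ x ^ (k + 1) := pow_le_pow_left₀ h0 h _
      have e2 : x * (x ^ (k + 1) - y ^ (k + 1)) ≤ x * ((k + 1) * x ^ k * (x - y)) := by
        apply mul_le_mul_of_nonneg_left _ hx0
        simpa using ih
      have e3 : y ^ (k + 1) * (x - y) ≤ x ^ (k + 1) * (x - y) :=
        mul_le_mul_of_nonneg_right hyn (by linarith)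
      have e1 : x ^ (k + 1 + 1) - y ^ (k + 1 + 1)
          = x * (x ^ (k + 1) - y ^ (k + 1)) + y ^ (k + 1) * (x - y) := by ring
      have e4 : (((k:ℝ) + 1 + 1) * x ^ (k + 1) * (x - y))
          = x * (((k:ℝ) + 1) * x ^ k * (x - y)) + x ^ (k + 1) * (x - y) := by ring
      push_cast
      linarith

lemma inv_pow_sub_le_aux (n : ℕ) (hn : 1 ≤ n) {a b A B : ℝ} (hA : 0 < A) (hB : 0 < B)
    (hBb : B ≤ b) (hAa : A ≤ a) (hba : b ≤ a) :
    (b ^ n)⁻¹ - (a ^ n)⁻¹ ≤ n * (a - b) / (B ^ n * A) := by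
  have hb : 0 < b := hB.trans_le hBb
  have ha : 0 < a := hA.trans_le hAa
  have hden : (0:ℝ) < a ^ n * b ^ n := by positivity
  have h2 : a ^ n - b ^ n ≤ n * a ^ (n - 1) * (a - b) := pow_sub_pow_le' n hb.le hba
  have hne : a ^ (n-1) * a = a ^ n := by
    rw [← pow_succ]; congr 1; omega
  calc (b ^ n)⁻¹ - (a ^ n)⁻¹ = (a ^ n - b ^ n) / (a ^ n * b ^ n) := by
        rw [eq_div_iff hden.ne']; field_simp
    _ ≤ (n * a ^ (n - 1) * (a - b)) / (a ^ n * b ^ n) := by gcongr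
    _ = (n * (a - b)) / (a * b ^ n) := by
        rw [← hne]; field_simp
    _ ≤ (n * (a - b)) / (B ^ n * A) := by
        have hle : B ^ n * A ≤ a * b ^ n := by
          calc B ^ n * A ≤ b ^ n * a :=
              mul_le_mul (pow_le_pow_left₀ hB.le hBb n) hAa hA.le (pow_nonneg hb.le n)
            _ = a * b ^ n := mul_comm _ _
        gcongr

lemma heq_key (n : ℕ) (X E Z : ℝ) (hX : 0 < X) (hE : 0 < E) :
    (E ^ n)⁻¹ * ((n:ℝ) * (E⁻¹ * Z) / ((X / (4 * E)) ^ n * (X / (2 * E))))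
      = (n:ℝ) * (4 ^ n * 2) * Z / X ^ (n + 1) := by
  rw [div_pow]
  field_simp
  ring

lemma inv_pow_sub_abs_le (n : ℕ) (hn : 1 ≤ n) {a b A B : ℝ} (hA : 0 < A) (hB : 0 < B)
    (hAa : A ≤ a) (hBa : B ≤ a) (hBb : B ≤ b) :
    |(a ^ n)⁻¹ - (b ^ n)⁻¹| ≤ n * |a - b| / (B ^ n * A) := by
  have hb : 0 < b := hB.trans_le hBb
  have ha : 0 < a := hA.trans_le hAa
  rcases le_total b a with hba | hab
  · rw [abs_of_nonpos (by
      have : (a ^ n)⁻¹ ≤ (b ^ n)⁻¹ := by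
        apply inv_anti₀ (by positivity) (pow_le_pow_left₀ hb.le hba n)
      linarith), abs_of_nonneg (by linarith)]
    have := inv_pow_sub_le_aux n hn hA hB hBb hAa hba
    linarith
  · rw [abs_of_nonneg (by
      have : (b ^ n)⁻¹ ≤ (a ^ n)⁻¹ := by
        apply inv_anti₀ (by positivity) (pow_le_pow_left₀ ha.le hab n)
      linarith), abs_of_nonpos (by linarith)]
    have := inv_pow_sub_le_aux n hn hA hB hBa (hAa.trans hab) hab
    rw [neg_sub]
    linarith

set_option maxHeartbeats 1000000 in
/-- Let `d ≥ 3`, `W` continuous nonnegative supported in the unit ball, and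
`u = u_W` the killing probability (characterized by its Newtonian potential representation
and mass bound), with rescaling `u_W^ε(x) = ε^{2−d} u_W(x/ε)`. Then for all `x, z, ε > 0`
with `‖x‖ ≥ max{2‖z‖ + ε, 2ε}`,
`|u_W^ε(x+z) − u_W^ε(x)| ≤ 2^{3d−6} ‖z‖ / ‖x‖^{d−1}`, uniformly in `W`. -/
theorem stmt5 (d : ℕ) (hd : 3 ≤ d)
    (W u : EuclideanSpace ℝ (Fin d) → ℝ) (c₀ : ℝ)
    (hWc : Continuous W) (hW0 : ∀ x, 0 ≤ W x)
    (hWsupp : ∀ x : EuclideanSpace ℝ (Fin d), 1 < ‖x‖ → W x = 0)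
    (hurange : ∀ x, 0 ≤ u x ∧ u x ≤ 1)
    (hc₀ : c₀ = ((d : ℝ) * ((d : ℝ) - 1) *
      (volume (Metric.ball (0 : EuclideanSpace ℝ (Fin d)) 1)).toReal)⁻¹)
    (hrep : ∀ x, u x = c₀ * ∫ y, W y * (1 - u y) * ‖x - y‖ ^ ((2 : ℝ) - d))
    (hmass : (∫ y, W y * (1 - u y)) ≤ c₀⁻¹) :
    ∀ (x z : EuclideanSpace ℝ (Fin d)) (ε : ℝ), 0 < ε →
      max (2 * ‖z‖ + ε) (2 * ε) ≤ ‖x‖ →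
      |ε ^ ((2 : ℝ) - d) * u (ε⁻¹ • (x + z)) - ε ^ ((2 : ℝ) - d) * u (ε⁻¹ • x)|
        ≤ (2 : ℝ) ^ (3 * d - 6) * ‖z‖ / ‖x‖ ^ (d - 1) := by
  have hc₀pos : 0 < c₀ := by
    rw [hc₀]
    have hvol_pos : 0 < (volume (Metric.ball (0 : EuclideanSpace ℝ (Fin d)) 1)).toReal :=
      ENNReal.toReal_pos (Metric.measure_ball_pos volume 0 one_pos).ne' measure_ball_lt_top.ne
    have hd3 : (3:ℝ) ≤ (d:ℝ) := by exact_mod_cast hd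
    have hd1 : (0:ℝ) < (d : ℝ) * ((d : ℝ) - 1) := by nlinarith
    positivity
  obtain ⟨n, hn⟩ : ∃ n, n = d - 2 := ⟨d - 2, rfl⟩
  have hn1 : 1 ≤ n := by omega
  have hcast : ((n:ℕ):ℝ) = (d:ℝ) - 2 := by
    rw [hn, Nat.cast_sub (by omega : 2 ≤ d)]; norm_num
  have hkr : ∀ t : ℝ, 0 < t → t ^ ((2:ℝ) - (d:ℝ)) = (t ^ n)⁻¹ := by
    intro t ht
    rw [show (2:ℝ) - (d:ℝ) = -((n:ℕ):ℝ) by rw [hcast]; ring,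
      Real.rpow_neg ht.le, Real.rpow_natCast]
  intro x z ε hε hmax
  have hx2z : 2*‖z‖ + ε ≤ ‖x‖ := le_trans (le_max_left _ _) hmax
  have hx2e : 2*ε ≤ ‖x‖ := le_trans (le_max_right _ _) hmax
  have hx : 0 < ‖x‖ := lt_of_lt_of_le (by linarith) hx2e
  set p := ε⁻¹ • (x + z) with hpdef
  set q := ε⁻¹ • x with hqdef
  set A := ‖x‖ / (2*ε) with hAdef
  set B := ‖x‖ / (4*ε) with hBdef
  have hApos : 0 < A := div_pos hx (by positivity)
  have hBpos : 0 < B := div_pos hx (by positivity)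
  have hBA : B ≤ A := by
    rw [hAdef, hBdef, div_le_div_iff₀ (by positivity) (by positivity)]
    nlinarith [mul_nonneg hx.le hε.le]
  have hnq : ‖q‖ = ε⁻¹ * ‖x‖ := by
    rw [hqdef, norm_smul, norm_inv, Real.norm_eq_abs, abs_of_pos hε]
  have hnpl : ε⁻¹ * (‖x‖ - ‖z‖) ≤ ‖p‖ := by
    have h1 : ‖x‖ ≤ ‖x + z‖ + ‖z‖ := by
      simpa using norm_add_le (x + z) (-z)
    have h2 : ‖p‖ = ε⁻¹ * ‖x + z‖ := by
      rw [hpdef, norm_smul, norm_inv, Real.norm_eq_abs, abs_of_pos hε]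
    rw [h2]
    have h3 : (0:ℝ) < ε⁻¹ := inv_pos.2 hε
    nlinarith
  have hq_lb : ∀ y : EuclideanSpace ℝ (Fin d), ‖y‖ ≤ 1 → A ≤ ‖q - y‖ := by
    intro y hy
    have h1 : ‖q‖ - ‖y‖ ≤ ‖q - y‖ := norm_sub_norm_le q y
    have h2 : A ≤ ε⁻¹ * ‖x‖ - 1 := by
      rw [hAdef, div_le_iff₀ (by positivity : (0:ℝ) < 2*ε)]
      have he : (ε⁻¹ * ‖x‖ - 1) * (2*ε) = 2*‖x‖ - 2*ε := by
        field_simp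
      rw [he]; linarith
    linarith [hnq ▸ h1]
  have hp_lb : ∀ y : EuclideanSpace ℝ (Fin d), ‖y‖ ≤ 1 → B ≤ ‖p - y‖ := by
    intro y hy
    have h1 : ‖p‖ - ‖y‖ ≤ ‖p - y‖ := norm_sub_norm_le p y
    have h2 : B ≤ ε⁻¹ * (‖x‖ - ‖z‖) - 1 := by
      rw [hBdef, div_le_iff₀ (by positivity : (0:ℝ) < 4*ε)]
      have he : (ε⁻¹ * (‖x‖ - ‖z‖) - 1) * (4*ε) = 4*‖x‖ - 4*‖z‖ - 4*ε := by
        field_simp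
      rw [he]; linarith
    linarith
  have hdiff : ∀ y : EuclideanSpace ℝ (Fin d), |‖q - y‖ - ‖p - y‖| ≤ ε⁻¹ * ‖z‖ := by
    intro y
    have h1 : |‖q - y‖ - ‖p - y‖| ≤ ‖(q - y) - (p - y)‖ := abs_norm_sub_norm_le _ _
    have h2 : (q - y) - (p - y) = -(ε⁻¹ • z) := by
      rw [hqdef, hpdef, smul_add]; abel
    rw [h2, norm_neg, norm_smul, norm_inv, Real.norm_eq_abs, abs_of_pos hε] at h1
    exact h1
  set κ := (n:ℝ) * (ε⁻¹ * ‖z‖) / (B ^ n * A) with hκdef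
  have hκ0 : 0 ≤ κ := by
    apply div_nonneg _ (by positivity)
    have := norm_nonneg z
    positivity
  have hker : ∀ y : EuclideanSpace ℝ (Fin d), ‖y‖ ≤ 1 →
      |‖p - y‖ ^ ((2:ℝ) - (d:ℝ)) - ‖q - y‖ ^ ((2:ℝ) - (d:ℝ))| ≤ κ := by
    intro y hy
    have ha := hq_lb y hy
    have hb := hp_lb y hy
    have hBa : B ≤ ‖q - y‖ := le_trans hBA ha
    rw [hkr _ (lt_of_lt_of_le hBpos hb), hkr _ (lt_of_lt_of_le hApos ha), abs_sub_comm]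
    calc |(‖q - y‖ ^ n)⁻¹ - (‖p - y‖ ^ n)⁻¹|
        ≤ n * |‖q - y‖ - ‖p - y‖| / (B ^ n * A) :=
          inv_pow_sub_abs_le n hn1 hApos hBpos ha hBa hb
      _ ≤ κ := by
          rw [hκdef]
          gcongr
          exact hdiff y
  have hf0 : ∀ y, 0 ≤ W y * (1 - u y) := fun y =>
    mul_nonneg (hW0 y) (by linarith [(hurange y).2])
  clear_value p q A B κ
  by_cases hmeas : AEStronglyMeasurable
      (fun y : EuclideanSpace ℝ (Fin d) => W y * (1 - u y)) volume
  case neg =>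
    exfalso
    apply hmeas
    have hu0 : ∀ x' : EuclideanSpace ℝ (Fin d), u x' = 0 := by
      intro x'
      have hnot : ¬ AEStronglyMeasurable
          (fun y : EuclideanSpace ℝ (Fin d) =>
            W y * (1 - u y) * ‖x' - y‖ ^ ((2:ℝ) - (d:ℝ))) volume := by
        intro hg
        apply hmeas
        have hk : Measurable (fun y : EuclideanSpace ℝ (Fin d) =>
            (‖x' - y‖ ^ ((2:ℝ) - (d:ℝ)))⁻¹) :=
          ((continuous_const.sub continuous_id).norm.measurable.pow_const _).inv
        have hae : ∀ᵐ (y : EuclideanSpace ℝ (Fin d)), y ≠ x' := by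
          have hnt : Nontrivial (EuclideanSpace ℝ (Fin d)) := by
            have : Nonempty (Fin d) := ⟨⟨0, by omega⟩⟩
            infer_instance
          have hs : (volume : Measure (EuclideanSpace ℝ (Fin d))) {x'} = 0 :=
            measure_singleton x'
          rw [ae_iff]
          simpa using hs
        refine (hg.mul hk.aestronglyMeasurable).congr ?_
        filter_upwards [hae] with y hy
        have ht : 0 < ‖x' - y‖ := by
          rw [norm_pos_iff, sub_ne_zero]; exact Ne.symm hy
        have hne : ‖x' - y‖ ^ ((2:ℝ) - (d:ℝ)) ≠ 0 := by
          rw [hkr _ ht]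
          exact inv_ne_zero (pow_ne_zero n ht.ne')
        exact mul_inv_cancel_right₀ hne _
      have h := hrep x'
      rw [integral_undef (fun hi => hnot hi.1)] at h
      simpa using h
    have heq : (fun y : EuclideanSpace ℝ (Fin d) => W y * (1 - u y)) = W := by
      funext y; rw [hu0 y]; ring
    rw [heq]
    exact hWc.aestronglyMeasurable
  case pos =>
    obtain ⟨y₀, -, hy₀⟩ := (isCompact_closedBall (0 : EuclideanSpace ℝ (Fin d)) 1).exists_isMaxOn
      ⟨0, Metric.mem_closedBall_self zero_le_one⟩ hWc.continuousOn
    have hC0 : 0 ≤ W y₀ := hW0 y₀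
    have hfle : ∀ y : EuclideanSpace ℝ (Fin d), W y * (1 - u y)
        ≤ (Metric.closedBall (0:EuclideanSpace ℝ (Fin d)) 1).indicator (fun _ => W y₀) y := by
      intro y
      by_cases hy : y ∈ Metric.closedBall (0:EuclideanSpace ℝ (Fin d)) 1
      · rw [Set.indicator_of_mem hy]
        calc W y * (1 - u y) ≤ W y * 1 :=
            mul_le_mul_of_nonneg_left (by linarith [(hurange y).1]) (hW0 y)
          _ = W y := mul_one _
          _ ≤ W y₀ := hy₀ hy
      · rw [Set.indicator_of_notMem hy]
        have h1 : 1 < ‖y‖ := by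
          rw [Metric.mem_closedBall, dist_zero_right] at hy
          linarith [not_le.1 hy]
        rw [hWsupp y h1, zero_mul]
    have hind : Integrable
        ((Metric.closedBall (0:EuclideanSpace ℝ (Fin d)) 1).indicator (fun _ => W y₀)) := by
      rw [integrable_indicator_iff measurableSet_closedBall]
      exact integrableOn_const (isCompact_closedBall _ _).measure_lt_top.ne
    have hf_int : Integrable (fun y : EuclideanSpace ℝ (Fin d) => W y * (1 - u y)) :=
      hind.mono' hmeas (Filter.Eventually.of_forall (fun y => by
        rw [Real.norm_eq_abs, abs_of_nonneg (hf0 y)]; exact hfle y))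
    have hKmeas : ∀ w : EuclideanSpace ℝ (Fin d),
        Measurable (fun y : EuclideanSpace ℝ (Fin d) => ‖w - y‖ ^ ((2:ℝ) - (d:ℝ))) := fun w =>
      (continuous_const.sub continuous_id).norm.measurable.pow_const _
    have hint : ∀ w : EuclideanSpace ℝ (Fin d), (∀ y : EuclideanSpace ℝ (Fin d), ‖y‖ ≤ 1 → B ≤ ‖w - y‖) →
        Integrable (fun y : EuclideanSpace ℝ (Fin d) =>
          W y * (1 - u y) * ‖w - y‖ ^ ((2:ℝ) - (d:ℝ))) := by
      intro w hw
      refine (hf_int.const_mul ((B ^ n)⁻¹)).mono' (hmeas.mul (hKmeas w).aestronglyMeasurable)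
        (Filter.Eventually.of_forall fun y => ?_)
      by_cases hy : ‖y‖ ≤ 1
      · have hbw : B ≤ ‖w - y‖ := hw y hy
        have h0w : 0 < ‖w - y‖ := lt_of_lt_of_le hBpos hbw
        rw [Real.norm_eq_abs, abs_mul, abs_of_nonneg (hf0 y), hkr _ h0w,
          abs_of_nonneg (by positivity)]
        calc W y * (1 - u y) * (‖w - y‖ ^ n)⁻¹ ≤ W y * (1 - u y) * (B ^ n)⁻¹ := by
              gcongr
              exact hf0 y
          _ = (B ^ n)⁻¹ * (W y * (1 - u y)) := by ring
      · have h1 : W y = 0 := hWsupp y (not_le.1 hy)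
        rw [h1]
        simp
    have hIp := hint p (fun y hy => hp_lb y hy)
    have hIq := hint q (fun y hy => le_trans hBA (hq_lb y hy))
    have hεn : ε ^ ((2:ℝ) - (d:ℝ)) = (ε ^ n)⁻¹ := hkr ε hε
    have hεrp : 0 < ε ^ ((2:ℝ) - (d:ℝ)) := Real.rpow_pos_of_pos hε _
    have hptwise : ∀ y : EuclideanSpace ℝ (Fin d),
        |W y * (1 - u y) * ‖p - y‖ ^ ((2:ℝ) - (d:ℝ)) -
          W y * (1 - u y) * ‖q - y‖ ^ ((2:ℝ) - (d:ℝ))|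
          ≤ W y * (1 - u y) * κ := by
      intro y
      rw [← mul_sub, abs_mul, abs_of_nonneg (hf0 y)]
      by_cases hy : ‖y‖ ≤ 1
      · exact mul_le_mul_of_nonneg_left (hker y hy) (hf0 y)
      · rw [hWsupp y (not_le.1 hy)]
        simp
    have habs : |(∫ y, W y * (1 - u y) * ‖p - y‖ ^ ((2:ℝ) - (d:ℝ))) -
        (∫ y, W y * (1 - u y) * ‖q - y‖ ^ ((2:ℝ) - (d:ℝ)))|
        ≤ (∫ y, W y * (1 - u y)) * κ := by
      rw [← integral_sub hIp hIq]
      calc |∫ y, (W y * (1 - u y) * ‖p - y‖ ^ ((2:ℝ) - (d:ℝ)) -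
            W y * (1 - u y) * ‖q - y‖ ^ ((2:ℝ) - (d:ℝ)))|
          ≤ ∫ y, |W y * (1 - u y) * ‖p - y‖ ^ ((2:ℝ) - (d:ℝ)) -
            W y * (1 - u y) * ‖q - y‖ ^ ((2:ℝ) - (d:ℝ))| := by
            simpa [Real.norm_eq_abs] using norm_integral_le_integral_norm
              (fun y : EuclideanSpace ℝ (Fin d) =>
                W y * (1 - u y) * ‖p - y‖ ^ ((2:ℝ) - (d:ℝ)) -
                W y * (1 - u y) * ‖q - y‖ ^ ((2:ℝ) - (d:ℝ)))
        _ ≤ ∫ y, W y * (1 - u y) * κ :=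
            integral_mono ((hIp.sub hIq).abs) (hf_int.mul_const κ) (fun y => hptwise y)
        _ = (∫ y, W y * (1 - u y)) * κ := integral_mul_const κ _
    have hmass' : c₀ * (∫ y, W y * (1 - u y)) ≤ 1 := by
      calc c₀ * (∫ y, W y * (1 - u y)) ≤ c₀ * c₀⁻¹ :=
          mul_le_mul_of_nonneg_left hmass hc₀pos.le
        _ = 1 := mul_inv_cancel₀ hc₀pos.ne'
    have hfinal : ε ^ ((2:ℝ) - (d:ℝ)) * κ ≤ (2:ℝ) ^ (3 * d - 6) * ‖z‖ / ‖x‖ ^ (d - 1) := by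
      have hnat : n * (4 ^ n * 2) ≤ 2 ^ (3 * d - 6) := by
        have h1 : n ≤ 2 ^ (n - 1) := by
          have := Nat.lt_two_pow_self (n := n - 1)
          omega
        have h2 : 2 ^ (3 * d - 6) = 4 ^ n * 2 * 2 ^ (n - 1) := by
          have h3 : 3 * d - 6 = 2 * n + 1 + (n - 1) := by omega
          rw [h3, pow_add, pow_add, pow_mul]
          norm_num
        calc n * (4 ^ n * 2) ≤ 2 ^ (n - 1) * (4 ^ n * 2) := Nat.mul_le_mul_right _ h1
          _ = 4 ^ n * 2 * 2 ^ (n - 1) := by ring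
          _ = 2 ^ (3 * d - 6) := h2.symm
      have hcoef : ((n:ℝ)) * (4 ^ n * 2) ≤ (2:ℝ) ^ (3 * d - 6) := by
        exact_mod_cast hnat
      have heq : ε ^ ((2:ℝ) - (d:ℝ)) * κ = (n:ℝ) * (4 ^ n * 2) * ‖z‖ / ‖x‖ ^ (n + 1) := by
        rw [hεn, hκdef, hAdef, hBdef]
        exact heq_key n ‖x‖ ε ‖z‖ hx hε
      have hd1 : d - 1 = n + 1 := by omega
      rw [heq, hd1]
      gcongr
    rw [hrep p, hrep q]
    set Ip := ∫ y, W y * (1 - u y) * ‖p - y‖ ^ ((2:ℝ) - (d:ℝ)) with hIpd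
    set Iq := ∫ y, W y * (1 - u y) * ‖q - y‖ ^ ((2:ℝ) - (d:ℝ)) with hIqd
    set If := ∫ y, W y * (1 - u y) with hIfd
    clear_value Ip Iq If
    calc |ε ^ ((2:ℝ) - (d:ℝ)) * (c₀ * Ip) - ε ^ ((2:ℝ) - (d:ℝ)) * (c₀ * Iq)|
        = (ε ^ ((2:ℝ) - (d:ℝ)) * c₀) * |Ip - Iq| := by
          rw [show ε ^ ((2:ℝ) - (d:ℝ)) * (c₀ * Ip) - ε ^ ((2:ℝ) - (d:ℝ)) * (c₀ * Iq)
            = (ε ^ ((2:ℝ) - (d:ℝ)) * c₀) * (Ip - Iq) from by ring, abs_mul,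
            abs_of_nonneg (mul_nonneg hεrp.le hc₀pos.le)]
      _ ≤ (ε ^ ((2:ℝ) - (d:ℝ)) * c₀) * (If * κ) :=
          mul_le_mul_of_nonneg_left habs (mul_nonneg hεrp.le hc₀pos.le)
      _ = (ε ^ ((2:ℝ) - (d:ℝ)) * κ) * (c₀ * If) := by ring
      _ ≤ (ε ^ ((2:ℝ) - (d:ℝ)) * κ) * 1 :=
          mul_le_mul_of_nonneg_left hmass' (mul_nonneg hεrp.le hκ0)
      _ = ε ^ ((2:ℝ) - (d:ℝ)) * κ := mul_one _
      _ ≤ (2:ℝ) ^ (3 * d - 6) * ‖z‖ / ‖x‖ ^ (d - 1) := hfinal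
end

section
/- Let d ≥ 3, W continuous supported in the unit ball, and u_W^ε(x) = ε^{2−d} u_W(x/ε) the rescaled killing probability. Then for all x, z ∈ ℝ^d and ε > 0 with ‖x‖ ≥ max{2‖z‖ + ε, 2ε}, we have ‖∇u_W^ε(x+z) − ∇u_W^ε(x)‖ ≤ 4^d (2^{d−1} d + 1) ‖z‖ / ‖x‖^d. -/
open MeasureTheory

open Finset in
lemma kdiff_aux {E : Type*} [NormedAddCommGroup E] [NormedSpace ℝ E]
    (d : ℕ) {a b : E} {r : ℝ} (hr : 0 < r) (ha : r ≤ ‖a‖) (hb : r ≤ ‖b‖) :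
    ‖(‖b‖ ^ d)⁻¹ • b - (‖a‖ ^ d)⁻¹ • a‖ ≤ ((d : ℝ) + 1) * ‖b - a‖ / r ^ d := by
  have hA : 0 < ‖a‖ := hr.trans_le ha
  have hB : 0 < ‖b‖ := hr.trans_le hb
  have hrd : 0 < r ^ d := pow_pos hr d
  have hAd : (0:ℝ) < ‖a‖ ^ d := pow_pos hA d
  have hBd : (0:ℝ) < ‖b‖ ^ d := pow_pos hB d
  have key : (‖b‖^d)⁻¹ • b - (‖a‖^d)⁻¹ • a
      = (‖b‖^d)⁻¹ • (b - a) + ((‖b‖^d)⁻¹ - (‖a‖^d)⁻¹) • a := by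
    rw [smul_sub, sub_smul]; abel
  have t1 : ‖(‖b‖^d : ℝ)⁻¹ • (b-a)‖ ≤ ‖b-a‖ / r^d := by
    rw [norm_smul, norm_inv, norm_pow, norm_norm, div_eq_inv_mul]
    gcongr
  have t2 : ‖(((‖b‖^d : ℝ)⁻¹ - (‖a‖^d)⁻¹)) • a‖ ≤ (d:ℝ) * ‖b - a‖ / r^d := by
    rw [norm_smul, Real.norm_eq_abs]
    set A := ‖a‖ with hAdef
    set B := ‖b‖ with hBdef
    have habs : |A - B| ≤ ‖b - a‖ := by
      rw [abs_sub_comm]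
      exact abs_norm_sub_norm_le b a
    rw [inv_sub_inv hBd.ne' hAd.ne']
    set S : ℝ := ∑ i ∈ range d, A ^ i * B ^ (d-1-i) with hSdef
    have hgs : A^d - B^d = S * (A - B) := (geom_sum₂_mul A B d).symm
    have hS0 : 0 ≤ S := Finset.sum_nonneg fun i _ => by positivity
    have hterm : ∀ i ∈ range d, (A^i * B^(d-1-i)) * A * r^d ≤ A^d * B^d := by
      intro i hi
      have hi' : i < d := mem_range.mp hi
      have e1 : r ^ d = r^(d-1-i) * r^(i+1) := by rw [← pow_add]; congr 1; omega
      have e2 : A ^ d = A^(i+1) * A^(d-1-i) := by rw [← pow_add]; congr 1; omega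
      have e3 : B ^ d = B^(d-1-i) * B^(i+1) := by rw [← pow_add]; congr 1; omega
      have h1 : r^(d-1-i) ≤ A^(d-1-i) := pow_le_pow_left₀ hr.le ha _
      have h2 : r^(i+1) ≤ B^(i+1) := pow_le_pow_left₀ hr.le hb _
      calc (A^i * B^(d-1-i)) * A * r^d
          = (A^(i+1) * B^(d-1-i)) * (r^(d-1-i) * r^(i+1)) := by
            rw [e1, pow_succ]; ring
        _ ≤ (A^(i+1) * B^(d-1-i)) * (A^(d-1-i) * B^(i+1)) := by
            have hfac : (0:ℝ) ≤ A^(i+1) * B^(d-1-i) := by positivity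
            apply mul_le_mul_of_nonneg_left _ hfac
            exact mul_le_mul h1 h2 (by positivity) (by positivity)
        _ = A^d * B^d := by rw [e2, e3]; ring
    have hSbound : S * A * r^d ≤ (d:ℝ) * (A^d * B^d) := by
      calc S * A * r^d = ∑ i ∈ range d, (A^i * B^(d-1-i)) * A * r^d := by
            rw [hSdef, Finset.sum_mul, Finset.sum_mul]
        _ ≤ ∑ _i ∈ range d, A^d * B^d := Finset.sum_le_sum hterm
        _ = (d:ℝ) * (A^d * B^d) := by
            rw [Finset.sum_const, card_range, nsmul_eq_mul]
    have habs2 : |(A^d - B^d) / (B^d * A^d)| = |A^d - B^d| / (B^d * A^d) := by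
      rw [abs_div]
      congr 1
      exact abs_of_pos (by positivity)
    rw [habs2]
    have hnum : |A^d - B^d| ≤ S * ‖b - a‖ := by
      rw [hgs, abs_mul, abs_of_nonneg hS0]
      exact mul_le_mul_of_nonneg_left habs hS0
    have step : |A^d - B^d| / (B^d * A^d) * A ≤ (S * ‖b-a‖) / (B^d * A^d) * A := by
      gcongr
    refine step.trans ?_
    rw [div_mul_eq_mul_div, div_le_div_iff₀ (by positivity) hrd]
    have := mul_le_mul_of_nonneg_right hSbound (norm_nonneg (b - a))
    nlinarith [norm_nonneg (b - a)]
  calc ‖(‖b‖^d)⁻¹ • b - (‖a‖^d)⁻¹ • a‖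
      ≤ ‖(‖b‖^d : ℝ)⁻¹ • (b-a)‖ + ‖(((‖b‖^d : ℝ)⁻¹ - (‖a‖^d)⁻¹)) • a‖ := by
        rw [key]; exact norm_add_le _ _
    _ ≤ ‖b-a‖ / r^d + (d:ℝ) * ‖b - a‖ / r^d := add_le_add t1 t2
    _ = ((d : ℝ) + 1) * ‖b - a‖ / r ^ d := by ring

lemma aesm_aux (d : ℕ) (hd1 : 1 ≤ d) (W u : EuclideanSpace ℝ (Fin d) → ℝ)
    (hW0 : ∀ x, 0 ≤ W x) (hu1 : ∀ x, u x ≤ 1)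
    (hWsupp : ∀ x : EuclideanSpace ℝ (Fin d), 1 < ‖x‖ → W x = 0)
    (ε : ℝ) (hε : 0 < ε) (c : EuclideanSpace ℝ (Fin d)) (hc : ε < ‖c‖)
    (hint : Integrable (fun y => (W y * (1 - u y) * (‖c - ε • y‖ ^ d)⁻¹) • (c - ε • y))) :
    AEStronglyMeasurable (fun y => W y * (1 - u y)) volume := by
  have heq : (fun y : EuclideanSpace ℝ (Fin d) => W y * (1 - u y)) = fun y =>
      ‖(W y * (1 - u y) * (‖c - ε • y‖ ^ d)⁻¹) • (c - ε • y)‖ * ‖c - ε • y‖ ^ (d - 1) := by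
    funext y
    by_cases h0 : c - ε • y = 0
    · have hy1 : 1 < ‖y‖ := by
        have hcy : c = ε • y := by rwa [sub_eq_zero] at h0
        have hcn : ‖c‖ = ε * ‖y‖ := by rw [hcy, norm_smul, Real.norm_eq_abs, abs_of_pos hε]
        nlinarith [norm_nonneg y]
      rw [hWsupp y hy1, h0]
      simp
    · have hN : (0:ℝ) < ‖c - ε • y‖ := norm_pos_iff.mpr h0
      have hnn : 0 ≤ W y * (1 - u y) * (‖c - ε • y‖ ^ d)⁻¹ :=
        mul_nonneg (mul_nonneg (hW0 y) (by linarith [hu1 y])) (by positivity)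
      rw [norm_smul, Real.norm_eq_abs, abs_of_nonneg hnn]
      have hpow : ‖c - ε • y‖ * ‖c - ε • y‖ ^ (d - 1) = ‖c - ε • y‖ ^ d := by
        rw [← pow_succ']
        congr 1
        omega
      symm
      rw [mul_assoc, hpow, mul_assoc, inv_mul_cancel₀ (by positivity), mul_one]
  rw [heq]
  exact hint.aestronglyMeasurable.norm.mul
    (((continuous_const.sub (continuous_id.const_smul ε)).norm.pow _).aestronglyMeasurable)

lemma const_aux (d : ℕ) (hd : 3 ≤ d) :
    ((d:ℝ) - 2) * ((d:ℝ) + 1) ≤ 2 ^ (d-1) * (d:ℝ) + 1 := by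
  have h2 : d ≤ 2 ^ (d-1) := by
    have h := Nat.lt_two_pow_self (n := d-1)
    calc d = d - 1 + 1 := by omega
      _ ≤ 2 ^ (d-1) := h
  have h1 : (d:ℝ) ≤ 2 ^ (d-1) := by exact_mod_cast h2
  have hd3 : (3:ℝ) ≤ (d:ℝ) := by exact_mod_cast hd
  nlinarith

/-- Let `d ≥ 3`, `W` continuous nonnegative supported in the unit ball,
`u = u_W` the killing probability with mass bound `∫ W(1−u) ≤ c₀⁻¹`, and
`u_W^ε(x) = ε^{2−d} u_W(x/ε)` the rescaled killing probability, whose gradient satisfies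
`∇u_W^ε(x) = −(d−2) c₀ ∫ W(y)(1−u_W(y)) (x−εy)/‖x−εy‖^d dy`. Then for all `x, z, ε > 0`
with `‖x‖ ≥ max{2‖z‖ + ε, 2ε}`,
`‖∇u_W^ε(x+z) − ∇u_W^ε(x)‖ ≤ 4^d (2^{d−1} d + 1) ‖z‖ / ‖x‖^d`. -/
theorem stmt6 (d : ℕ) (hd : 3 ≤ d)
    (W u : EuclideanSpace ℝ (Fin d) → ℝ) (c₀ : ℝ)
    (hWc : Continuous W) (hW0 : ∀ x, 0 ≤ W x)
    (hWsupp : ∀ x : EuclideanSpace ℝ (Fin d), 1 < ‖x‖ → W x = 0)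
    (hurange : ∀ x, 0 ≤ u x ∧ u x ≤ 1)
    (hc₀ : c₀ = ((d : ℝ) * ((d : ℝ) - 1) *
      (volume (Metric.ball (0 : EuclideanSpace ℝ (Fin d)) 1)).toReal)⁻¹)
    (hmass : (∫ y, W y * (1 - u y)) ≤ c₀⁻¹)
    (ε : ℝ) (hε : 0 < ε)
    (hgrad : ∀ x : EuclideanSpace ℝ (Fin d),
      gradient (fun y => ε ^ ((2 : ℝ) - d) * u (ε⁻¹ • y)) x
        = (-(((d : ℝ) - 2) * c₀)) •
            ∫ y, (W y * (1 - u y) * (‖x - ε • y‖ ^ d)⁻¹) • (x - ε • y)) :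
    ∀ x z : EuclideanSpace ℝ (Fin d),
      max (2 * ‖z‖ + ε) (2 * ε) ≤ ‖x‖ →
      ‖gradient (fun y => ε ^ ((2 : ℝ) - d) * u (ε⁻¹ • y)) (x + z)
          - gradient (fun y => ε ^ ((2 : ℝ) - d) * u (ε⁻¹ • y)) x‖
        ≤ (4 : ℝ) ^ d * ((2 : ℝ) ^ (d - 1) * d + 1) * ‖z‖ / ‖x‖ ^ d := by
  intro x z hx
  have hx1 : 2 * ‖z‖ + ε ≤ ‖x‖ := le_trans (le_max_left _ _) hx
  have hx2 : 2 * ε ≤ ‖x‖ := le_trans (le_max_right _ _) hx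
  have hx0 : 0 < ‖x‖ := by linarith
  have hd3 : (3:ℝ) ≤ (d:ℝ) := by exact_mod_cast hd
  -- positivity of c₀
  have hvol : 0 < (volume (Metric.ball (0 : EuclideanSpace ℝ (Fin d)) 1)).toReal := by
    have h1 : 0 < volume (Metric.ball (0:EuclideanSpace ℝ (Fin d)) 1) :=
      Metric.measure_ball_pos _ _ one_pos
    have h2 : volume (Metric.ball (0:EuclideanSpace ℝ (Fin d)) 1) < ⊤ := measure_ball_lt_top
    exact ENNReal.toReal_pos h1.ne' h2.ne
  have hc0 : 0 < c₀ := by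
    rw [hc₀]
    apply inv_pos.mpr
    apply mul_pos (mul_pos (by linarith) (by linarith)) hvol
  rw [hgrad, hgrad, ← smul_sub, norm_smul]
  set fb : EuclideanSpace ℝ (Fin d) → EuclideanSpace ℝ (Fin d) :=
    fun y => (W y * (1 - u y) * (‖x + z - ε • y‖ ^ d)⁻¹) • (x + z - ε • y) with hfb_def
  set fa : EuclideanSpace ℝ (Fin d) → EuclideanSpace ℝ (Fin d) :=
    fun y => (W y * (1 - u y) * (‖x - ε • y‖ ^ d)⁻¹) • (x - ε • y) with hfa_def
  set C : ℝ := ((d:ℝ) + 1) * ‖z‖ / (‖x‖/4) ^ d with hC_def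
  have hC0 : 0 ≤ C := by positivity
  -- pointwise bound
  have key : ∀ y, ‖fb y - fa y‖ ≤ (W y * (1 - u y)) * C := by
    intro y
    by_cases hy : ‖y‖ ≤ 1
    · have hεy : ‖ε • y‖ ≤ ε := by
        rw [norm_smul, Real.norm_eq_abs, abs_of_pos hε]
        nlinarith
      have ha1 : ‖x‖/4 ≤ ‖x - ε • y‖ := by
        have h1 := norm_sub_norm_le x (ε • y)
        linarith
      have hb1 : ‖x‖/4 ≤ ‖x + z - ε • y‖ := by
        have h1 := norm_sub_norm_le x (ε • y - z)
        have h2 : x - (ε • y - z) = x + z - ε • y := by abel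
        have h3 : ‖ε • y - z‖ ≤ ‖ε • y‖ + ‖z‖ := norm_sub_le _ _
        rw [h2] at h1
        linarith
      have hzdiff : (x + z - ε • y) - (x - ε • y) = z := by abel
      have hkd := kdiff_aux d (r := ‖x‖/4) (by positivity) ha1 hb1
      rw [hzdiff] at hkd
      have hrw : fb y - fa y = (W y * (1 - u y)) •
          ((‖x + z - ε • y‖ ^ d)⁻¹ • (x + z - ε • y) - (‖x - ε • y‖ ^ d)⁻¹ • (x - ε • y)) := by
        rw [hfa_def, hfb_def, smul_sub, ← mul_smul, ← mul_smul]
      have hnn : 0 ≤ W y * (1 - u y) :=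
        mul_nonneg (hW0 y) (by linarith [(hurange y).2])
      rw [hrw, norm_smul, Real.norm_eq_abs, abs_of_nonneg hnn, hC_def]
      exact mul_le_mul_of_nonneg_left hkd hnn
    · have hW : W y = 0 := hWsupp y (by linarith [not_le.mp hy])
      simp [hfa_def, hfb_def, hW]
  -- integrability of W
  have hWcs : HasCompactSupport W := by
    apply HasCompactSupport.intro (isCompact_closedBall (0:EuclideanSpace ℝ (Fin d)) 1)
    intro y hy
    apply hWsupp
    rw [Metric.mem_closedBall, dist_zero_right, not_le] at hy
    exact hy
  have hWint : Integrable W := hWc.integrable_of_hasCompactSupport hWcs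
  have hh0 : ∀ y, 0 ≤ W y * (1 - u y) := fun y =>
    mul_nonneg (hW0 y) (by linarith [(hurange y).2])
  have hhW : ∀ y, W y * (1 - u y) ≤ W y := fun y => by
    nlinarith [(hurange y).1, hW0 y, (hurange y).2]
  have hhint : AEStronglyMeasurable (fun y => W y * (1 - u y)) volume →
      Integrable (fun y => W y * (1 - u y)) := fun hm =>
    hWint.mono' hm (ae_of_all _ fun y => by
      rw [Real.norm_eq_abs, abs_of_nonneg (hh0 y)]; exact hhW y)
  -- integrability of the difference, given measurability of the density
  have hconta : Continuous fun y : EuclideanSpace ℝ (Fin d) => x - ε • y :=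
    continuous_const.sub (continuous_id.const_smul ε)
  have hcontb : Continuous fun y : EuclideanSpace ℝ (Fin d) => x + z - ε • y :=
    continuous_const.sub (continuous_id.const_smul ε)
  have hma : Measurable fun y : EuclideanSpace ℝ (Fin d) => (‖x - ε • y‖ ^ d)⁻¹ :=
    ((hconta.norm.measurable).pow_const d).inv
  have hmb : Measurable fun y : EuclideanSpace ℝ (Fin d) => (‖x + z - ε • y‖ ^ d)⁻¹ :=
    ((hcontb.norm.measurable).pow_const d).inv
  have hgint : AEStronglyMeasurable (fun y => W y * (1 - u y)) volume →
      Integrable (fun y => fb y - fa y) := by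
    intro hm
    have hfa_m : AEStronglyMeasurable fa volume := by
      rw [hfa_def]
      exact (hm.mul hma.aestronglyMeasurable).smul hconta.aestronglyMeasurable
    have hfb_m : AEStronglyMeasurable fb volume := by
      rw [hfb_def]
      exact (hm.mul hmb.aestronglyMeasurable).smul hcontb.aestronglyMeasurable
    exact ((hhint hm).mul_const C).mono' (hfb_m.sub hfa_m) (ae_of_all _ key)
  have hεx : ε < ‖x‖ := by linarith
  have hεxz : ε < ‖x + z‖ := by
    have h := norm_sub_le (x + z) z
    rw [add_sub_cancel_right] at h
    linarith
  have hnorm : ‖-(((d:ℝ) - 2) * c₀)‖ = ((d:ℝ) - 2) * c₀ := by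
    rw [norm_neg, Real.norm_eq_abs, abs_of_nonneg (mul_nonneg (by linarith) hc0.le)]
  by_cases HA : Integrable fa
  · have hm : AEStronglyMeasurable (fun y => W y * (1 - u y)) volume :=
      aesm_aux d (by omega) W u hW0 (fun y => (hurange y).2) hWsupp ε hε x hεx HA
    have hg : Integrable (fun y => fb y - fa y) := hgint hm
    have hfb : Integrable fb := by
      exact (HA.add hg).congr (Filter.Eventually.of_forall fun y => by
        simp only [Pi.add_apply]; abel)
    have hsub : (∫ y, fb y) - (∫ y, fa y) = ∫ y, (fb y - fa y) :=
      (integral_sub hfb HA).symm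
    have hint_norm : ‖∫ y, (fb y - fa y)‖ ≤ c₀⁻¹ * C := by
      calc ‖∫ y, (fb y - fa y)‖ ≤ ∫ y, ‖fb y - fa y‖ := norm_integral_le_integral_norm _
        _ ≤ ∫ y, (W y * (1 - u y)) * C :=
            integral_mono hg.norm ((hhint hm).mul_const C) key
        _ = (∫ y, W y * (1 - u y)) * C := integral_mul_const _ _
        _ ≤ c₀⁻¹ * C := mul_le_mul_of_nonneg_right hmass hC0
    have hfinal : ((d:ℝ) - 2) * C ≤ (4 : ℝ) ^ d * ((2 : ℝ) ^ (d - 1) * d + 1) * ‖z‖ / ‖x‖ ^ d := by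
      rw [hC_def, div_pow, div_div_eq_mul_div]
      rw [show ((d:ℝ) - 2) * (((d:ℝ) + 1) * ‖z‖ * 4 ^ d / ‖x‖ ^ d)
          = (((d:ℝ) - 2) * ((d:ℝ) + 1)) * ‖z‖ * 4 ^ d / ‖x‖ ^ d by ring]
      have hxd : (0:ℝ) < ‖x‖ ^ d := by positivity
      rw [div_le_div_iff_of_pos_right hxd]
      have h := mul_le_mul_of_nonneg_right (const_aux d hd)
        (mul_nonneg (by positivity : (0:ℝ) ≤ (4:ℝ) ^ d) (norm_nonneg z))
      calc (((d:ℝ) - 2) * ((d:ℝ) + 1)) * ‖z‖ * 4 ^ d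
          = (((d:ℝ) - 2) * ((d:ℝ) + 1)) * ((4:ℝ) ^ d * ‖z‖) := by ring
        _ ≤ ((2:ℝ) ^ (d-1) * (d:ℝ) + 1) * ((4:ℝ) ^ d * ‖z‖) := h
        _ = (4 : ℝ) ^ d * ((2 : ℝ) ^ (d - 1) * (d:ℝ) + 1) * ‖z‖ := by ring
    calc ‖-(((d:ℝ) - 2) * c₀)‖ * ‖(∫ y, fb y) - ∫ y, fa y‖
        = (((d:ℝ) - 2) * c₀) * ‖∫ y, (fb y - fa y)‖ := by rw [hnorm, hsub]
      _ ≤ (((d:ℝ) - 2) * c₀) * (c₀⁻¹ * C) :=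
          mul_le_mul_of_nonneg_left hint_norm (mul_nonneg (by linarith) hc0.le)
      _ = ((d:ℝ) - 2) * C := by
          rw [show ((d:ℝ) - 2) * c₀ * (c₀⁻¹ * C) = ((d:ℝ) - 2) * C * (c₀ * c₀⁻¹) by ring,
            mul_inv_cancel₀ hc0.ne', mul_one]
      _ ≤ _ := hfinal
  · have HB : ¬ Integrable fb := by
      intro HB
      apply HA
      have hm : AEStronglyMeasurable (fun y => W y * (1 - u y)) volume :=
        aesm_aux d (by omega) W u hW0 (fun y => (hurange y).2) hWsupp ε hε (x + z) hεxz HB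
      have hg : Integrable (fun y => fb y - fa y) := hgint hm
      exact (HB.sub hg).congr (Filter.Eventually.of_forall fun y => by
        simp only [Pi.sub_apply]; abel)
    rw [integral_undef HA, integral_undef HB]
    simp only [sub_zero, norm_zero, mul_zero]
    positivity
end
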